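/- For any integer k ≥ 3 and any σ ∈ {−1,+1}^k, the quadratic form σᵀ M σ = (2/k)·∑_{a,b} σ_a σ_b cos(π(a−b)/k) satisfies σᵀ M σ ≤ 2/(k·sin²(π/(2k))). -/

import Mathlib

open Real

/-- `|cos|` is periodic with period `π`. -/
lemma abs_cos_periodic' : Function.Periodic (fun x => |Real.cos x|) π := by
  intro x
  simp [Real.cos_add_pi, abs_neg]

/-- The integral of `|cos|` over `[0, π]` equals `2`. -/
lemma integral_abs_cos' : ∫ x in (0:ℝ)..π, |Real.cos x| = 2 := by
  have hint : ∀ a b : ℝ, IntervalIntegrable (fun x => |Real.cos x|) MeasureTheory.volume a b :=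
    fun a b => (Real.continuous_cos.abs).intervalIntegrable a b
  have hsplit : (∫ x in (0:ℝ)..(π/2), |Real.cos x|) + ∫ x in (π/2)..π, |Real.cos x|
      = ∫ x in (0:ℝ)..π, |Real.cos x| :=
    intervalIntegral.integral_add_adjacent_intervals (hint _ _) (hint _ _)
  have h1 : ∫ x in (0:ℝ)..(π/2), |Real.cos x| = 1 := by
    rw [intervalIntegral.integral_congr (g := Real.cos) ?_]
    · rw [integral_cos]; simp
    · intro x hx
      rw [Set.uIcc_of_le (by positivity)] at hx
      exact abs_of_nonneg (Real.cos_nonneg_of_mem_Icc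
        ⟨by linarith [hx.1, Real.pi_pos], hx.2⟩)
  have h2 : ∫ x in (π/2)..π, |Real.cos x| = 1 := by
    rw [intervalIntegral.integral_congr (g := fun x => -Real.cos x) ?_]
    · rw [intervalIntegral.integral_neg, integral_cos]; simp
    · intro x hx
      rw [Set.uIcc_of_le (by linarith [Real.pi_pos])] at hx
      exact abs_of_nonpos (Real.cos_nonpos_of_pi_div_two_le_of_le hx.1
        (by linarith [hx.2, Real.pi_pos]))
  linarith

/-- Half-angle style identity for cosine. -/
lemma cos_eq_sin_diff (x t : ℝ) (ht : Real.sin t ≠ 0) :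
    Real.cos x = (Real.sin (x + t) - Real.sin (x - t)) / (2 * Real.sin t) := by
  rw [Real.sin_add, Real.sin_sub]
  field_simp
  ring

/-- Key lemma: for bounded coefficients, the shifted cosine sum is at most `1/sin(π/(2k))`. -/
lemma key_cos_sum_bound (k : ℕ) (hk : 3 ≤ k) (σ : Fin k → ℝ) (hσ : ∀ a, |σ a| ≤ 1) (θ : ℝ) :
    ∑ a : Fin k, σ a * Real.cos (π * (a : ℝ) / k - θ) ≤ 1 / Real.sin (π / (2 * k)) := by
  have hk0 : (0:ℝ) < k := by exact_mod_cast (by omega : 0 < k)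
  have hkne : (k:ℝ) ≠ 0 := ne_of_gt hk0
  have hk3 : (3:ℝ) ≤ k := by exact_mod_cast hk
  set h : ℝ := π / (2 * k) with hhdef
  have hh0 : 0 < h := by positivity
  have hhπ : h < π := by
    rw [hhdef, div_lt_iff₀ (by positivity)]
    nlinarith [Real.pi_pos]
  have hs : 0 < Real.sin h := Real.sin_pos_of_pos_of_lt_pi hh0 hhπ
  set f : ℕ → ℝ := fun i => π * (i : ℝ) / k - θ - h with hf
  have hstep : ∀ i : ℕ, f (i + 1) = f i + π / k := by
    intro i; simp only [hf]; push_cast; ring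
  have hcos : ∀ a : Fin k,
      Real.cos (π * (a : ℝ) / k - θ)
        = (Real.sin (f ((a : ℕ) + 1)) - Real.sin (f (a : ℕ))) / (2 * Real.sin h) := by
    intro a
    have e1 : f ((a : ℕ) + 1) = (π * (a : ℝ) / k - θ) + h := by
      simp only [hf, hhdef]; push_cast; field_simp; ring
    have e2 : f (a : ℕ) = (π * (a : ℝ) / k - θ) - h := by simp only [hf]
    rw [e1, e2]
    exact cos_eq_sin_diff _ _ (ne_of_gt hs)
  have hterm : ∀ a : Fin k,
      σ a * (Real.sin (f ((a : ℕ) + 1)) - Real.sin (f (a : ℕ)))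
        ≤ ∫ x in (f (a : ℕ))..(f ((a : ℕ) + 1)), |Real.cos x| := by
    intro a
    have hle : f (a : ℕ) ≤ f ((a : ℕ) + 1) := by
      rw [hstep]
      have : 0 < π / k := by positivity
      linarith
    calc σ a * (Real.sin (f ((a : ℕ) + 1)) - Real.sin (f (a : ℕ)))
        ≤ |σ a * (Real.sin (f ((a : ℕ) + 1)) - Real.sin (f (a : ℕ)))| := le_abs_self _
      _ = |σ a| * |Real.sin (f ((a : ℕ) + 1)) - Real.sin (f (a : ℕ))| := abs_mul _ _
      _ ≤ 1 * |Real.sin (f ((a : ℕ) + 1)) - Real.sin (f (a : ℕ))| :=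
          mul_le_mul_of_nonneg_right (hσ a) (abs_nonneg _)
      _ = |∫ x in (f (a : ℕ))..(f ((a : ℕ) + 1)), Real.cos x| := by rw [one_mul, integral_cos]
      _ ≤ ∫ x in (f (a : ℕ))..(f ((a : ℕ) + 1)), |Real.cos x| :=
          intervalIntegral.abs_integral_le_integral_abs hle
  have hTV : ∑ a : Fin k, σ a * (Real.sin (f ((a : ℕ) + 1)) - Real.sin (f (a : ℕ))) ≤ 2 := by
    calc ∑ a : Fin k, σ a * (Real.sin (f ((a : ℕ) + 1)) - Real.sin (f (a : ℕ)))
        ≤ ∑ a : Fin k, ∫ x in (f (a : ℕ))..(f ((a : ℕ) + 1)), |Real.cos x| :=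
          Finset.sum_le_sum (fun a _ => hterm a)
      _ = ∑ i ∈ Finset.range k, ∫ x in (f i)..(f (i + 1)), |Real.cos x| :=
          Fin.sum_univ_eq_sum_range (fun i : ℕ => ∫ x in (f i)..(f (i + 1)), |Real.cos x|) k
      _ = ∫ x in (f 0)..(f k), |Real.cos x| :=
          intervalIntegral.sum_integral_adjacent_intervals
            (fun i _ => (Real.continuous_cos.abs).intervalIntegrable _ _)
      _ = ∫ x in (f 0)..(f 0 + π), |Real.cos x| := by
          congr 1
          simp only [hf]
          push_cast
          field_simp
          ring
      _ = ∫ x in (0:ℝ)..(0 + π), |Real.cos x| :=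
          abs_cos_periodic'.intervalIntegral_add_eq (f 0) 0
      _ = 2 := by rw [zero_add]; exact integral_abs_cos'
  have hrw : ∑ a : Fin k, σ a * Real.cos (π * (a : ℝ) / k - θ)
      = (∑ a : Fin k, σ a * (Real.sin (f ((a : ℕ) + 1)) - Real.sin (f (a : ℕ)))) / (2 * Real.sin h) := by
    rw [Finset.sum_div]
    exact Finset.sum_congr rfl (fun a _ => by rw [hcos a, mul_div_assoc])
  rw [hrw, div_le_div_iff₀ (mul_pos two_pos hs) hs]
  nlinarith [hTV, hs]

/-- For `k ≥ 3` and any sign vector `σ ∈ {±1}^k`, the quadratic form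
`σᵀ M σ = (2/k) ∑_{a,b} σ_a σ_b cos(π(a-b)/k)` is at most `2/(k sin²(π/(2k)))`. -/
theorem sign_vector_quadratic_form_bound (k : ℕ) (hk : 3 ≤ k)
    (σ : Fin k → ℝ) (hσ : ∀ a, σ a = 1 ∨ σ a = -1) :
    (2 / (k : ℝ)) * ∑ a : Fin k, ∑ b : Fin k,
        σ a * σ b * Real.cos (π * ((a : ℝ) - (b : ℝ)) / k)
      ≤ 2 / ((k : ℝ) * Real.sin (π / (2 * k)) ^ 2) := by
  have hσ1 : ∀ a, |σ a| ≤ 1 := by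
    intro a
    rcases hσ a with h | h <;> rw [h] <;> simp
  have key : ∀ θ : ℝ, ∑ a : Fin k, σ a * Real.cos (π * (a : ℝ) / k - θ)
      ≤ 1 / Real.sin (π / (2 * k)) := key_cos_sum_bound k hk σ hσ1
  have hk0 : (0:ℝ) < k := by exact_mod_cast (by omega : 0 < k)
  have hk3 : (3:ℝ) ≤ k := by exact_mod_cast hk
  have hh0 : 0 < π / (2 * (k:ℝ)) := by positivity
  have hhπ : π / (2 * (k:ℝ)) < π := by
    rw [div_lt_iff₀ (by positivity)]
    nlinarith [Real.pi_pos]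
  have hs : 0 < Real.sin (π / (2 * k)) := Real.sin_pos_of_pos_of_lt_pi hh0 hhπ
  set C : ℝ := ∑ a : Fin k, σ a * Real.cos (π * (a : ℝ) / k) with hC
  set S : ℝ := ∑ a : Fin k, σ a * Real.sin (π * (a : ℝ) / k) with hS
  have hCS : ∑ a : Fin k, ∑ b : Fin k,
      σ a * σ b * Real.cos (π * ((a : ℝ) - (b : ℝ)) / k) = C ^ 2 + S ^ 2 := by
    have hC2 : C ^ 2 = ∑ a : Fin k, ∑ b : Fin k,
        (σ a * Real.cos (π * (a : ℝ) / k)) * (σ b * Real.cos (π * (b : ℝ) / k)) := by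
      rw [sq, hC, Finset.sum_mul_sum]
    have hS2 : S ^ 2 = ∑ a : Fin k, ∑ b : Fin k,
        (σ a * Real.sin (π * (a : ℝ) / k)) * (σ b * Real.sin (π * (b : ℝ) / k)) := by
      rw [sq, hS, Finset.sum_mul_sum]
    rw [hC2, hS2, ← Finset.sum_add_distrib]
    refine Finset.sum_congr rfl (fun a _ => ?_)
    rw [← Finset.sum_add_distrib]
    refine Finset.sum_congr rfl (fun b _ => ?_)
    have : π * ((a : ℝ) - (b : ℝ)) / k = π * (a : ℝ) / k - π * (b : ℝ) / k := by ring
    rw [this, Real.cos_sub]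
    ring
  rw [hCS]
  have hbound : C ^ 2 + S ^ 2 ≤ (1 / Real.sin (π / (2 * k))) ^ 2 := by
    set R : ℝ := Real.sqrt (C ^ 2 + S ^ 2) with hRdef
    have hRnn : 0 ≤ R := Real.sqrt_nonneg _
    have hR2 : R ^ 2 = C ^ 2 + S ^ 2 := Real.sq_sqrt (by positivity)
    have hRle : R ≤ 1 / Real.sin (π / (2 * k)) := by
      by_cases hz : C = 0 ∧ S = 0
      · rw [hRdef, hz.1, hz.2]
        simp
        positivity
      · set z : ℂ := ⟨C, S⟩ with hzdef
        have hzne : z ≠ 0 := by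
          intro h0
          exact hz ⟨by simpa using congrArg Complex.re h0,
            by simpa using congrArg Complex.im h0⟩
        have habs : ‖z‖ = R := by
          rw [hRdef, Complex.norm_def, Complex.normSq_mk]
          congr 1
          ring
        have hR0 : 0 < R := by
          rw [← habs]
          exact norm_pos_iff.mpr hzne
        have hcosarg : Real.cos z.arg = C / R := by
          rw [Complex.cos_arg hzne, habs]
        have hsinarg : Real.sin z.arg = S / R := by
          rw [Complex.sin_arg, habs]
        have hRsum : R = ∑ a : Fin k, σ a * Real.cos (π * (a : ℝ) / k - z.arg) := by
          have e1 : ∑ a : Fin k, σ a * Real.cos (π * (a : ℝ) / k - z.arg)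
              = C * Real.cos z.arg + S * Real.sin z.arg := by
            rw [hC, hS, Finset.sum_mul, Finset.sum_mul, ← Finset.sum_add_distrib]
            refine Finset.sum_congr rfl (fun a _ => ?_)
            rw [Real.cos_sub]
            ring
          rw [e1, hcosarg, hsinarg]
          field_simp
          nlinarith [hR2]
        rw [hRsum]
        exact key z.arg
    calc C ^ 2 + S ^ 2 = R ^ 2 := hR2.symm
      _ ≤ (1 / Real.sin (π / (2 * k))) ^ 2 := by
          apply pow_le_pow_left₀ hRnn hRle
  calc (2 / (k : ℝ)) * (C ^ 2 + S ^ 2)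
      ≤ (2 / (k : ℝ)) * (1 / Real.sin (π / (2 * k))) ^ 2 := by
        apply mul_le_mul_of_nonneg_left hbound (by positivity)
    _ = 2 / ((k : ℝ) * Real.sin (π / (2 * k)) ^ 2) := by
        rw [div_pow, one_pow]
        field_simp
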